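/- arXiv:2302.07186 — 2 statements merged into one kernel-verified Lean document; each statement's English description precedes it below -/
import Mathlib

section
/- Let 𝒳 be a separable metrizable space with its Borel σ-algebra and 𝕏 a stochastic process on 𝒳 satisfying condition C4. Then for every p ≥ 0 the extended process 𝕏^p = (X_t)_{t∈𝒯^p} satisfies condition C1. -/
open MeasureTheory Filter Set Topology

noncomputable section

variable {Ω : Type*} [MeasurableSpace Ω] {𝒳 : Type*} [MeasurableSpace 𝒳]

/-- Average number of times `t ∈ 𝒯 ω`, `1 ≤ t ≤ T`, with `X t ω ∈ A`, divided by `T`. -/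
def avgVisit (X : ℕ → Ω → 𝒳) (𝒯 : Ω → Set ℕ) (A : Set 𝒳) (T : ℕ) (ω : Ω) : ℝ :=
  (T : ℝ)⁻¹ * ∑ t ∈ Finset.Icc 1 T,
    ({s : ℕ | s ∈ 𝒯 ω ∧ X s ω ∈ A}.indicator (fun _ => (1 : ℝ)) t)

/-- Limit submeasure `μ̂` of the extended process `(X_t)_{t ∈ 𝒯}`. -/
def limitSubmeasure (X : ℕ → Ω → 𝒳) (𝒯 : Ω → Set ℕ) (A : Set 𝒳) (ω : Ω) : ℝ :=
  Filter.limsup (fun T => avgVisit X 𝒯 A T ω) Filter.atTop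

/-- Condition C1 for the extended process `(X_t)_{t ∈ 𝒯}`. -/
def SatisfiesC1 (P : Measure Ω) (X : ℕ → Ω → 𝒳) (𝒯 : Ω → Set ℕ) : Prop :=
  ∀ A : ℕ → Set 𝒳, (∀ k, MeasurableSet (A k)) → Antitone A → (⋂ k, A k) = ∅ →
    Filter.Tendsto (fun k => ∫ ω, limitSubmeasure X 𝒯 (A k) ω ∂P) Filter.atTop (nhds 0)

/-- `T_i^k = ⌊2^u (1 + v·2^{-i})⌋` where `k = u·2^i + v`, `0 ≤ v < 2^i`. -/
def timeGrid (i k : ℕ) : ℕ :=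
  ⌊(2 : ℝ) ^ (k / 2 ^ i) * (1 + ((k % 2 ^ i : ℕ) : ℝ) / (2 ^ i : ℝ))⌋₊

/-- `𝒯^i`: times of first appearance of the instance within its period at scale `i`. -/
def scaleTimes (X : ℕ → Ω → 𝒳) (i : ℕ) (ω : Ω) : Set ℕ :=
  {t | 1 ≤ t ∧ ∀ k, timeGrid i k ≤ t → t < timeGrid i (k + 1) →
    ∀ t', timeGrid i k ≤ t' → t' < t → X t' ω ≠ X t ω}

/-- Condition C4. -/
def SatisfiesC4 (P : Measure Ω) (X : ℕ → Ω → 𝒳) : Prop :=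
  ∀ A : ℕ → Set 𝒳, (∀ i, MeasurableSet (A i)) → Pairwise (Function.onFun Disjoint A) →
    Filter.Tendsto (fun i => ∫ ω, limitSubmeasure X (scaleTimes X i) (A i) ω ∂P)
      Filter.atTop (nhds 0)

/-- Supremum over `T ≥ T₀` of the average visit counts. -/
def supAvgVisit (X : ℕ → Ω → 𝒳) (𝒯 : Ω → Set ℕ) (A : Set 𝒳) (T₀ : ℕ) (ω : Ω) : ℝ :=
  ⨆ T : {T : ℕ // T₀ ≤ T}, avgVisit X 𝒯 A T ω

/-- Number of sets `A k` visited by the process up to time `T`. -/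
def distinctSetCount (X : ℕ → Ω → 𝒳) (A : ℕ → Set 𝒳) (T : ℕ) (ω : Ω) : ℕ :=
  Set.ncard {k : ℕ | ∃ t, 1 ≤ t ∧ t ≤ T ∧ X t ω ∈ A k}

/-- Condition C2. -/
def SatisfiesC2 (P : Measure Ω) (X : ℕ → Ω → 𝒳) : Prop :=
  ∀ A : ℕ → Set 𝒳, (∀ k, MeasurableSet (A k)) → Pairwise (Function.onFun Disjoint A) →
    ∀ᵐ ω ∂P, Filter.Tendsto (fun T => (distinctSetCount X A T ω : ℝ) / T)
      Filter.atTop (nhds 0)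

/-- Condition C5. -/
def SatisfiesC5 (P : Measure Ω) (X : ℕ → Ω → 𝒳) : Prop :=
  ∃ Ti : ℕ → ℕ, Monotone Ti ∧
    SatisfiesC1 P X (fun ω => ⋃ i, scaleTimes X i ω ∩ {t : ℕ | Ti i ≤ t})

/-- `N_t(x) = Σ_{1 ≤ s ≤ t} 1[X_s = x]`, the occurrence count. -/
def dupCount (X : ℕ → Ω → 𝒳) (t : ℕ) (x : 𝒳) (ω : Ω) : ℕ :=
  Set.ncard {s : ℕ | 1 ≤ s ∧ s ≤ t ∧ X s ω = x}

/-- Condition C8. -/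
def SatisfiesC8 (P : Measure Ω) (X : ℕ → Ω → 𝒳) : Prop :=
  ∃ Ψ : ℕ → ℕ, Monotone Ψ ∧ Filter.Tendsto Ψ Filter.atTop Filter.atTop ∧
    ∀ A : ℕ → Set 𝒳, (∀ i, MeasurableSet (A i)) → Antitone A → (⋂ i, A i) = ∅ →
      Filter.Tendsto (fun i => ∫ ω, Filter.limsup (fun T : ℕ => (T : ℝ)⁻¹ *
          ∑ t ∈ Finset.Icc 1 T,
            ({s : ℕ | X s ω ∈ A i ∧ dupCount X s (X s ω) ω ≤ Ψ T}.indicator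
              (fun _ => (1 : ℝ)) t)) Filter.atTop ∂P)
        Filter.atTop (nhds 0)


/-! ### Auxiliary lemmas for Statement 11 -/

section Stmt11Aux

/-- The time grid is monotone in `k`. -/
lemma timeGrid_mono (i : ℕ) : Monotone (timeGrid i) := by
  apply monotone_nat_of_le_succ
  intro k
  apply Nat.floor_le_floor
  have h2i : (0:ℕ) < 2 ^ i := Nat.pow_pos (by norm_num)
  have hmod : k % 2 ^ i < 2 ^ i := Nat.mod_lt _ h2i
  have hdm : k % 2 ^ i + 2 ^ i * (k / 2 ^ i) = k := Nat.mod_add_div _ _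
  have h2r : (0:ℝ) < (2:ℝ) ^ i := by positivity
  rcases Nat.lt_or_ge (k % 2 ^ i + 1) (2 ^ i) with h | h
  · have key : (k+1) / 2 ^ i = k / 2 ^ i ∧ (k+1) % 2 ^ i = k % 2 ^ i + 1 :=
      (Nat.div_mod_unique h2i).2 ⟨by omega, h⟩
    rw [key.1, key.2]
    push_cast
    gcongr
    linarith
  · have he : k % 2 ^ i + 1 = 2 ^ i := by omega
    have hexp : 2 ^ i * (k / 2 ^ i + 1) = 2 ^ i * (k / 2 ^ i) + 2 ^ i := by ring
    have key : (k+1) / 2 ^ i = k / 2 ^ i + 1 ∧ (k+1) % 2 ^ i = 0 :=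
      (Nat.div_mod_unique h2i).2 ⟨by omega, h2i⟩
    rw [key.1, key.2]
    have hle : ((k % 2 ^ i : ℕ):ℝ) / (2:ℝ) ^ i ≤ 1 := by
      rw [div_le_one h2r]
      exact_mod_cast hmod.le
    have hpow : (0:ℝ) < (2:ℝ) ^ (k / 2 ^ i) := by positivity
    rw [pow_succ]
    push_cast
    rw [zero_div, add_zero]
    nlinarith [mul_le_mul_of_nonneg_left hle hpow.le]

/-- Grid nesting: the scale-`p` grid is a subgrid of the scale-`p+d` grid. -/
lemma timeGrid_nest (p d j : ℕ) : timeGrid (p + d) (j * 2 ^ d) = timeGrid p j := by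
  have hp : (0:ℕ) < 2 ^ p := Nat.pow_pos (by norm_num)
  have hd : (0:ℕ) < 2 ^ d := Nat.pow_pos (by norm_num)
  have hdm : j % 2 ^ p + 2 ^ p * (j / 2 ^ p) = j := Nat.mod_add_div _ _
  have hpd : (2:ℕ) ^ (p + d) = 2 ^ p * 2 ^ d := pow_add 2 p d
  have key : (j * 2 ^ d) / 2 ^ (p + d) = j / 2 ^ p ∧
      (j * 2 ^ d) % 2 ^ (p + d) = (j % 2 ^ p) * 2 ^ d := by
    rw [hpd]
    refine (Nat.div_mod_unique (by positivity)).2 ⟨?_, ?_⟩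
    · calc j % 2 ^ p * 2 ^ d + 2 ^ p * 2 ^ d * (j / 2 ^ p)
          = (j % 2 ^ p + 2 ^ p * (j / 2 ^ p)) * 2 ^ d := by ring
        _ = j * 2 ^ d := by rw [hdm]
    · exact Nat.mul_lt_mul_of_lt_of_le (Nat.mod_lt _ hp) (le_refl _) hd
  unfold timeGrid
  rw [key.1, key.2]
  congr 2
  have h2d : ((2:ℝ) ^ d) ≠ 0 := by positivity
  have h2p : ((2:ℝ) ^ p) ≠ 0 := by positivity
  push_cast [pow_add]
  field_simp

/-- The sets of first-appearance times are monotone in the scale. -/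
lemma scaleTimes_subset {Ω : Type*} {𝒳 : Type*} {X : ℕ → Ω → 𝒳} {p i : ℕ} (h : p ≤ i) (ω : Ω) :
    scaleTimes X p ω ⊆ scaleTimes X i ω := by
  intro t ht
  obtain ⟨ht1, ht2⟩ := ht
  refine ⟨ht1, ?_⟩
  intro k hk1 hk2 t' ht'1 ht'2
  obtain ⟨d, rfl⟩ : ∃ d, i = p + d := ⟨i - p, by omega⟩
  have hd : (0:ℕ) < 2 ^ d := Nat.pow_pos (by norm_num)
  set j := k / 2 ^ d with hj
  have hj1 : j * 2 ^ d ≤ k := Nat.div_mul_le_self k _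
  have hj2 : k + 1 ≤ (j + 1) * 2 ^ d := by
    have h1 : k % 2 ^ d + 2 ^ d * (k / 2 ^ d) = k := Nat.mod_add_div _ _
    have h2 : k % 2 ^ d < 2 ^ d := Nat.mod_lt _ hd
    have h3 : (j + 1) * 2 ^ d = 2 ^ d * (k / 2 ^ d) + 2 ^ d := by rw [hj]; ring
    omega
  have e1 : timeGrid p j ≤ timeGrid (p + d) k := by
    rw [← timeGrid_nest p d j]; exact timeGrid_mono _ hj1
  have e2 : timeGrid (p + d) (k + 1) ≤ timeGrid p (j + 1) := by
    rw [← timeGrid_nest p d (j+1)]; exact timeGrid_mono _ hj2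
  exact ht2 j (le_trans e1 hk1) (lt_of_lt_of_le hk2 e2) t' (le_trans e1 ht'1) ht'2

variable {X : ℕ → Ω → 𝒳}

lemma avgVisit_nonneg (𝒯 : Ω → Set ℕ) (A : Set 𝒳) (T : ℕ) (ω : Ω) :
    0 ≤ avgVisit X 𝒯 A T ω := by
  unfold avgVisit
  apply mul_nonneg (by positivity)
  exact Finset.sum_nonneg fun t _ => Set.indicator_nonneg (fun _ _ => zero_le_one) _

lemma avgVisit_le_one (𝒯 : Ω → Set ℕ) (A : Set 𝒳) (T : ℕ) (ω : Ω) :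
    avgVisit X 𝒯 A T ω ≤ 1 := by
  unfold avgVisit
  rcases Nat.eq_zero_or_pos T with hT | hT
  · simp [hT]
  have h1 : ∑ t ∈ Finset.Icc 1 T,
      ({s : ℕ | s ∈ 𝒯 ω ∧ X s ω ∈ A}.indicator (fun _ => (1:ℝ)) t) ≤ (T:ℝ) := by
    calc ∑ t ∈ Finset.Icc 1 T, ({s : ℕ | s ∈ 𝒯 ω ∧ X s ω ∈ A}.indicator (fun _ => (1:ℝ)) t)
        ≤ ∑ _t ∈ Finset.Icc 1 T, (1:ℝ) :=
          Finset.sum_le_sum fun t _ =>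
            Set.indicator_apply_le' (fun _ => le_refl _) (fun _ => zero_le_one)
      _ = (T:ℝ) := by simp [Nat.card_Icc]
  have hTpos : (0:ℝ) < T := by exact_mod_cast hT
  calc (T : ℝ)⁻¹ * ∑ t ∈ Finset.Icc 1 T,
        ({s : ℕ | s ∈ 𝒯 ω ∧ X s ω ∈ A}.indicator (fun _ => (1:ℝ)) t)
      ≤ (T:ℝ)⁻¹ * (T:ℝ) := by gcongr
    _ = 1 := inv_mul_cancel₀ hTpos.ne'

/-- Master monotonicity/transfer lemma for `avgVisit`. -/
lemma avgVisit_le_avgVisit {𝒯 𝒯' : Ω → Set ℕ} {A B : Set 𝒳} {T : ℕ} {ω : Ω}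
    (h𝒯 : 𝒯 ω ⊆ 𝒯' ω) (h : ∀ t, 1 ≤ t → t ≤ T → X t ω ∈ A → X t ω ∈ B) :
    avgVisit X 𝒯 A T ω ≤ avgVisit X 𝒯' B T ω := by
  unfold avgVisit
  apply mul_le_mul_of_nonneg_left _ (by positivity)
  apply Finset.sum_le_sum
  intro t ht
  rw [Finset.mem_Icc] at ht
  by_cases hmem : t ∈ {s : ℕ | s ∈ 𝒯 ω ∧ X s ω ∈ A}
  · have hmem' : t ∈ {s : ℕ | s ∈ 𝒯' ω ∧ X s ω ∈ B} := ⟨h𝒯 hmem.1, h t ht.1 ht.2 hmem.2⟩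
    rw [Set.indicator_of_mem hmem, Set.indicator_of_mem hmem']
  · rw [Set.indicator_of_notMem hmem]
    exact Set.indicator_nonneg (fun _ _ => zero_le_one) _

lemma limitSubmeasure_nonneg (𝒯 : Ω → Set ℕ) (A : Set 𝒳) (ω : Ω) :
    0 ≤ limitSubmeasure X 𝒯 A ω :=
  Filter.le_limsup_of_frequently_le
    (Filter.Frequently.of_forall fun T => avgVisit_nonneg 𝒯 A T ω)
    (Filter.isBoundedUnder_of ⟨1, fun T => avgVisit_le_one 𝒯 A T ω⟩)

lemma limitSubmeasure_le_one (𝒯 : Ω → Set ℕ) (A : Set 𝒳) (ω : Ω) :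
    limitSubmeasure X 𝒯 A ω ≤ 1 :=
  Filter.limsup_le_of_le
    (Filter.isCoboundedUnder_le_of_le Filter.atTop fun T => avgVisit_nonneg 𝒯 A T ω)
    (Filter.Eventually.of_forall fun T => avgVisit_le_one 𝒯 A T ω)

lemma limitSubmeasure_le {𝒯 𝒯' : Ω → Set ℕ} {A B : Set 𝒳} {ω : Ω}
    (h𝒯 : 𝒯 ω ⊆ 𝒯' ω) (hAB : A ⊆ B) :
    limitSubmeasure X 𝒯 A ω ≤ limitSubmeasure X 𝒯' B ω :=
  Filter.limsup_le_limsup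
    (Filter.Eventually.of_forall fun T =>
      avgVisit_le_avgVisit h𝒯 (fun _t _ _ hx => hAB hx))
    (Filter.isCoboundedUnder_le_of_le Filter.atTop fun T => avgVisit_nonneg 𝒯 A T ω)
    (Filter.isBoundedUnder_of ⟨1, fun T => avgVisit_le_one 𝒯' B T ω⟩)

section Meas

variable [TopologicalSpace 𝒳] [TopologicalSpace.SeparableSpace 𝒳]
    [TopologicalSpace.MetrizableSpace 𝒳] [BorelSpace 𝒳]

lemma secondCountable𝒳 : SecondCountableTopology 𝒳 := by
  letI : PseudoMetricSpace 𝒳 := TopologicalSpace.pseudoMetrizableSpacePseudoMetric 𝒳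
  exact UniformSpace.secondCountable_of_separable 𝒳

lemma measurableSet_scaleTimes (hX : ∀ t, Measurable (X t)) (i t : ℕ) :
    MeasurableSet {ω : Ω | t ∈ scaleTimes X i ω} := by
  haveI := secondCountable𝒳 (𝒳 := 𝒳)
  by_cases h1 : 1 ≤ t
  · have hset : {ω : Ω | t ∈ scaleTimes X i ω} =
        ⋂ k, ⋂ (_ : timeGrid i k ≤ t), ⋂ (_ : t < timeGrid i (k+1)),
          ⋂ t', ⋂ (_ : timeGrid i k ≤ t'), ⋂ (_ : t' < t), {ω : Ω | X t' ω ≠ X t ω} := by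
      ext ω
      simp only [scaleTimes, Set.mem_setOf_eq, Set.mem_iInter, h1, true_and]
    rw [hset]
    refine MeasurableSet.iInter fun k => MeasurableSet.iInter fun _ =>
      MeasurableSet.iInter fun _ => MeasurableSet.iInter fun t' =>
      MeasurableSet.iInter fun _ => MeasurableSet.iInter fun _ => ?_
    exact ((hX t').stronglyMeasurable.measurableSet_eq_fun (hX t).stronglyMeasurable).compl
  · have hset : {ω : Ω | t ∈ scaleTimes X i ω} = ∅ := by
      ext ω
      simp only [scaleTimes, Set.mem_setOf_eq, Set.mem_empty_iff_false, iff_false]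
      intro hmem
      exact h1 hmem.1
    rw [hset]
    exact MeasurableSet.empty

lemma measurable_avgVisit (hX : ∀ t, Measurable (X t)) {A : Set 𝒳} (hA : MeasurableSet A)
    (i T : ℕ) : Measurable fun ω => avgVisit X (scaleTimes X i) A T ω := by
  haveI := secondCountable𝒳 (𝒳 := 𝒳)
  unfold avgVisit
  apply Measurable.const_mul
  apply Finset.measurable_sum
  intro t _
  have hfun : (fun ω => ({s : ℕ | s ∈ scaleTimes X i ω ∧ X s ω ∈ A}.indicator
      (fun _ => (1:ℝ)) t))
      = Set.indicator ({ω : Ω | t ∈ scaleTimes X i ω} ∩ (X t) ⁻¹' A) (fun _ => (1:ℝ)) := by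
    ext ω
    by_cases h : t ∈ scaleTimes X i ω ∧ X t ω ∈ A
    · rw [Set.indicator_of_mem (by exact h), Set.indicator_of_mem (by exact ⟨h.1, h.2⟩)]
    · rw [Set.indicator_of_notMem (by exact h), Set.indicator_of_notMem
        (by simpa [Set.mem_inter_iff] using h)]
  rw [hfun]
  exact measurable_const.indicator ((measurableSet_scaleTimes hX i t).inter ((hX t) hA))

lemma measurable_limitSubmeasure (hX : ∀ t, Measurable (X t)) {A : Set 𝒳}
    (hA : MeasurableSet A) (i : ℕ) :
    Measurable fun ω => limitSubmeasure X (scaleTimes X i) A ω := by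
  unfold limitSubmeasure
  exact Measurable.limsup (fun T => measurable_avgVisit hX hA i T)

lemma integrable_limitSubmeasure {P : Measure Ω} [IsProbabilityMeasure P]
    (hX : ∀ t, Measurable (X t)) {A : Set 𝒳} (hA : MeasurableSet A) (i : ℕ) :
    Integrable (fun ω => limitSubmeasure X (scaleTimes X i) A ω) P := by
  refine ⟨(measurable_limitSubmeasure hX hA i).aestronglyMeasurable, ?_⟩
  apply MeasureTheory.HasFiniteIntegral.of_bounded (C := 1)
  apply Filter.Eventually.of_forall
  intro ω
  rw [Real.norm_eq_abs, abs_le]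
  constructor
  · linarith [limitSubmeasure_nonneg (X := X) (scaleTimes X i) A ω]
  · exact limitSubmeasure_le_one (X := X) (scaleTimes X i) A ω

end Meas

lemma integral_ge_of_indicator {P : Measure Ω} [IsProbabilityMeasure P] {f : Ω → ℝ} {H : Set Ω}
    (hf : Integrable f P) (h0 : ∀ ω, 0 ≤ f ω) (hH : MeasurableSet H) {ε : ℝ} (hε : 0 ≤ ε)
    (h : ∀ ω ∈ H, ε ≤ f ω) : ε * (P H).toReal ≤ ∫ ω, f ω ∂P := by
  have hind : Integrable (H.indicator fun _ => ε) P := (integrable_const ε).indicator hH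
  have hle : (H.indicator fun _ => ε) ≤ f := by
    intro ω
    by_cases hω : ω ∈ H
    · rw [Set.indicator_of_mem hω]; exact h ω hω
    · rw [Set.indicator_of_notMem hω]; exact h0 ω
  calc ε * (P H).toReal = ∫ ω, H.indicator (fun _ => ε) ω ∂P := by
        rw [integral_indicator_const ε hH, smul_eq_mul, mul_comm]; rfl
    _ ≤ ∫ ω, f ω ∂P := integral_mono hind hf hle

lemma prob_gt_of_integral {P : Measure Ω} [IsProbabilityMeasure P] {f : Ω → ℝ}
    (hmeas : Measurable f) (hf : Integrable f P) (h1 : ∀ ω, f ω ≤ 1) {ε : ℝ} (hε : 0 < ε)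
    (hint : 2 * ε ≤ ∫ ω, f ω ∂P) : ENNReal.ofReal ε ≤ P {ω | ε < f ω} := by
  set H := {ω | ε < f ω} with hH
  have hHm : MeasurableSet H := measurableSet_lt measurable_const hmeas
  have hub : ∫ ω, f ω ∂P ≤ ε + (P H).toReal := by
    have hle : f ≤ fun ω => ε + H.indicator (fun _ => (1:ℝ)) ω := by
      intro ω
      show f ω ≤ ε + H.indicator (fun _ => (1:ℝ)) ω
      by_cases hω : ω ∈ H
      · rw [Set.indicator_of_mem hω]; linarith [h1 ω]
      · rw [Set.indicator_of_notMem hω]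
        simp only [hH, Set.mem_setOf_eq, not_lt] at hω
        linarith
    calc ∫ ω, f ω ∂P ≤ ∫ ω, (ε + H.indicator (fun _ => (1:ℝ)) ω) ∂P :=
          integral_mono hf ((integrable_const ε).add ((integrable_const 1).indicator hHm)) hle
      _ = ε + (P H).toReal := by
          rw [integral_add (integrable_const ε) ((integrable_const 1).indicator hHm),
            integral_const, integral_indicator_const 1 hHm]
          simp
          rfl
  have hεle : ε ≤ (P H).toReal := by linarith
  exact ENNReal.ofReal_le_of_le_toReal hεle

end Stmt11Aux


/-- if 𝕏 satisfies C4 then each extended process 𝕏^p = (X_t)_{t∈𝒯^p}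
satisfies C1. -/
theorem stmt11 [TopologicalSpace 𝒳] [TopologicalSpace.SeparableSpace 𝒳]
    [TopologicalSpace.MetrizableSpace 𝒳] [BorelSpace 𝒳]
    (P : Measure Ω) [IsProbabilityMeasure P]
    (X : ℕ → Ω → 𝒳) (hX : ∀ t, Measurable (X t))
    (hC4 : SatisfiesC4 P X) :
    ∀ p : ℕ, SatisfiesC1 P X (scaleTimes X p) := by
  intro p A hA hAnt hA0
  by_contra hcon
  have hInt : ∀ (i : ℕ) (S : Set 𝒳), MeasurableSet S →
      Integrable (fun ω => limitSubmeasure X (scaleTimes X i) S ω) P :=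
    fun i S hS => integrable_limitSubmeasure hX hS i
  set a : ℕ → ℝ := fun k => ∫ ω, limitSubmeasure X (scaleTimes X p) (A k) ω ∂P with ha
  have hanti : Antitone a := by
    intro k l hkl
    apply integral_mono (hInt p (A l) (hA l)) (hInt p (A k) (hA k))
    intro ω
    exact limitSubmeasure_le (Set.Subset.refl _) (hAnt hkl)
  have hbdd : BddBelow (Set.range a) := by
    refine ⟨0, ?_⟩
    rintro x ⟨k, rfl⟩
    exact integral_nonneg fun ω => limitSubmeasure_nonneg (X := X) _ _ ω
  have htend : Filter.Tendsto a Filter.atTop (nhds (⨅ k, a k)) := tendsto_atTop_ciInf hanti hbdd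
  have hL0 : 0 ≤ ⨅ k, a k :=
    le_ciInf fun k => integral_nonneg fun ω => limitSubmeasure_nonneg (X := X) _ _ ω
  have hLne : (⨅ k, a k) ≠ 0 := fun h => hcon (h ▸ htend)
  set ε : ℝ := (⨅ k, a k) / 2 with hε
  have hεpos : 0 < ε := by
    have : 0 < ⨅ k, a k := lt_of_le_of_ne hL0 (Ne.symm hLne)
    rw [hε]; linarith
  have ha2 : ∀ k, 2 * ε ≤ a k := by
    intro k
    have := ciInf_le hbdd k
    rw [hε]; linarith
  -- Step B: with probability ≥ ε, arbitrarily large good horizons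
  have hW : ∀ k m : ℕ, ENNReal.ofReal ε ≤
      P {ω | ∃ T, m ≤ T ∧ ε ≤ avgVisit X (scaleTimes X p) (A k) T ω} := by
    intro k m
    have hmar := prob_gt_of_integral (measurable_limitSubmeasure hX (hA k) p)
      (hInt p (A k) (hA k)) (fun ω => limitSubmeasure_le_one (X := X) _ _ ω) hεpos (ha2 k)
    refine le_trans hmar (measure_mono ?_)
    intro ω hω
    simp only [Set.mem_setOf_eq] at hω ⊢
    have hfreq : ∃ᶠ T in Filter.atTop, ε < avgVisit X (scaleTimes X p) (A k) T ω :=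
      Filter.frequently_lt_of_lt_limsup
        (Filter.isCoboundedUnder_le_of_le Filter.atTop fun T =>
          avgVisit_nonneg (X := X) _ _ T ω) hω
    obtain ⟨T, hTm, hT⟩ := Filter.frequently_atTop.1 hfreq m
    exact ⟨T, hTm, hT.le⟩
  -- Step C: escape of finitely many points
  have hV : ∀ M k₀ : ℕ, ∃ k', k₀ < k' ∧
      P {ω | ∃ t, 1 ≤ t ∧ t ≤ M ∧ X t ω ∈ A k'} ≤ ENNReal.ofReal (ε/4) := by
    intro M k₀
    have htend0 : Filter.Tendsto (fun k => ∑ t ∈ Finset.Icc 1 M, P (X t ⁻¹' A k))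
        Filter.atTop (nhds 0) := by
      have hterm : ∀ t : ℕ, Filter.Tendsto (fun k => P (X t ⁻¹' A k)) Filter.atTop (nhds 0) := by
        intro t
        have hempty : ⋂ k, X t ⁻¹' A k = ∅ := by
          rw [← Set.preimage_iInter, hA0, Set.preimage_empty]
        have hlim := tendsto_measure_iInter_atTop (μ := P)
          (fun k => ((hX t) (hA k)).nullMeasurableSet)
          (fun k l hkl => Set.preimage_mono (hAnt hkl)) ⟨0, measure_ne_top _ _⟩
        rw [hempty] at hlim
        simpa [Function.comp_def] using hlim
      have := tendsto_finset_sum (Finset.Icc 1 M) (fun t _ => hterm t)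
      simpa using this
    have hev : ∀ᶠ k in Filter.atTop,
        ∑ t ∈ Finset.Icc 1 M, P (X t ⁻¹' A k) < ENNReal.ofReal (ε/4) :=
      htend0.eventually_lt_const (ENNReal.ofReal_pos.2 (by linarith))
    obtain ⟨N, hN⟩ := Filter.eventually_atTop.1 hev
    refine ⟨max N (k₀+1), lt_of_lt_of_le (Nat.lt_succ_self k₀) (le_max_right _ _), ?_⟩
    have hsetU : {ω | ∃ t, 1 ≤ t ∧ t ≤ M ∧ X t ω ∈ A (max N (k₀+1))}
        = ⋃ t ∈ Finset.Icc 1 M, X t ⁻¹' A (max N (k₀+1)) := by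
      ext ω
      simp [Finset.mem_Icc, and_assoc]
    calc P {ω | ∃ t, 1 ≤ t ∧ t ≤ M ∧ X t ω ∈ A (max N (k₀+1))}
        ≤ ∑ t ∈ Finset.Icc 1 M, P (X t ⁻¹' A (max N (k₀+1))) := by
          rw [hsetU]; exact measure_biUnion_finset_le _ _
      _ ≤ ENNReal.ofReal (ε/4) := (hN _ (le_max_left _ _)).le
  -- Step D: combined step
  have hStep : ∀ k m : ℕ, ∃ M, m ≤ M ∧ ∃ k', k < k' ∧ ENNReal.ofReal (ε/4) ≤
      P {ω | (∃ T, m ≤ T ∧ T ≤ M ∧ ε ≤ avgVisit X (scaleTimes X p) (A k) T ω) ∧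
             ∀ t, 1 ≤ t → t ≤ M → X t ω ∉ A k'} := by
    intro k m
    set U : ℕ → Set Ω := fun M =>
      {ω | ∃ T, m ≤ T ∧ T ≤ M ∧ ε ≤ avgVisit X (scaleTimes X p) (A k) T ω} with hU
    have hUmono : Monotone U := by
      intro M M' hMM' ω hω
      obtain ⟨T, h1, h2, h3⟩ := hω
      exact ⟨T, h1, h2.trans hMM', h3⟩
    have hUnion : {ω | ∃ T, m ≤ T ∧ ε ≤ avgVisit X (scaleTimes X p) (A k) T ω} = ⋃ M, U M := by
      ext ω
      simp only [hU, Set.mem_setOf_eq, Set.mem_iUnion]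
      constructor
      · rintro ⟨T, h1, h3⟩; exact ⟨T, T, h1, le_refl T, h3⟩
      · rintro ⟨M, T, h1, _, h3⟩; exact ⟨T, h1, h3⟩
    have hlim := tendsto_measure_iUnion_atTop (μ := P) hUmono
    rw [show ⋃ M, U M = {ω | ∃ T, m ≤ T ∧ ε ≤ avgVisit X (scaleTimes X p) (A k) T ω}
      from hUnion.symm] at hlim
    have hgt : ENNReal.ofReal (ε/2) <
        P {ω | ∃ T, m ≤ T ∧ ε ≤ avgVisit X (scaleTimes X p) (A k) T ω} :=
      lt_of_lt_of_le ((ENNReal.ofReal_lt_ofReal_iff hεpos).2 (by linarith)) (hW k m)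
    have hev := hlim.eventually_const_lt hgt
    obtain ⟨N, hN⟩ := Filter.eventually_atTop.1 hev
    set M := max N m with hM
    have hUM : ENNReal.ofReal (ε/2) ≤ P (U M) := (hN M (le_max_left _ _)).le
    obtain ⟨k', hk', hPk'⟩ := hV M k
    refine ⟨M, le_max_right _ _, k', hk', ?_⟩
    set Bad := {ω | ∃ t, 1 ≤ t ∧ t ≤ M ∧ X t ω ∈ A k'} with hBad
    set E := {ω | (∃ T, m ≤ T ∧ T ≤ M ∧ ε ≤ avgVisit X (scaleTimes X p) (A k) T ω) ∧
             ∀ t, 1 ≤ t → t ≤ M → X t ω ∉ A k'} with hE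
    have hsub : U M ⊆ E ∪ Bad := by
      intro ω hω
      by_cases hb : ω ∈ Bad
      · exact Or.inr hb
      · left
        refine ⟨hω, ?_⟩
        intro t h1 h2 hmem
        exact hb ⟨t, h1, h2, hmem⟩
    have hUB : P (U M) ≤ P E + P Bad := le_trans (measure_mono hsub) (measure_union_le _ _)
    have hkey : ENNReal.ofReal (ε/2) ≤ P E + ENNReal.ofReal (ε/4) :=
      le_trans hUM (le_trans hUB (add_le_add le_rfl hPk'))
    have h4 : ENNReal.ofReal (ε/4) = ENNReal.ofReal (ε/2) - ENNReal.ofReal (ε/4) := by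
      rw [← ENNReal.ofReal_sub _ (by linarith : (0:ℝ) ≤ ε/4)]
      congr 1
      ring
    rw [h4]
    exact tsub_le_iff_right.2 hkey
  -- Recursive construction
  choose Mf hMf kf hkf hPf using hStep
  set st : ℕ → ℕ × ℕ := fun n => (fun q : ℕ × ℕ => (kf q.1 q.2, Mf q.1 q.2 + 1))^[n] (0, 0)
    with hst
  set kk : ℕ → ℕ := fun n => (st n).1 with hkkdef
  set mm : ℕ → ℕ := fun n => (st n).2 with hmmdef
  set MM : ℕ → ℕ := fun n => Mf (kk n) (mm n) with hMMdef
  have hstep : ∀ n, st (n+1) = (kf (kk n) (mm n), MM n + 1) := by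
    intro n
    have hit : st (n+1) = (fun q : ℕ × ℕ => (kf q.1 q.2, Mf q.1 q.2 + 1)) (st n) := by
      rw [hst]; exact Function.iterate_succ_apply' _ _ _
    rw [hit]
  have hkk : ∀ n, kk (n+1) = kf (kk n) (mm n) := by
    intro n
    rw [hkkdef]
    simp only [hstep n]
    rfl
  have hmm : ∀ n, mm (n+1) = MM n + 1 := by
    intro n
    rw [hmmdef]
    simp only [hstep n]
  have hkmono : StrictMono kk := by
    apply strictMono_nat_of_lt_succ
    intro n
    rw [hkk n]
    exact hkf _ _
  have hmM : ∀ n, mm n ≤ MM n := fun n => hMf _ _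
  have hmge : ∀ n, n ≤ mm n := by
    intro n
    induction n with
    | zero => exact Nat.zero_le _
    | succ n ih =>
      have h1 := hmm n
      have h2 := hmM n
      omega
  set H : ℕ → Set Ω := fun n =>
    {ω | (∃ T, mm n ≤ T ∧ T ≤ MM n ∧ ε ≤ avgVisit X (scaleTimes X p) (A (kk n)) T ω) ∧
         ∀ t, 1 ≤ t → t ≤ MM n → X t ω ∉ A (kk (n+1))} with hHdef
  have hPH : ∀ n, ENNReal.ofReal (ε/4) ≤ P (H n) := by
    intro n
    have hres := hPf (kk n) (mm n)
    rw [hHdef]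
    simp only [hkk n]
    exact hres
  have hHmeas : ∀ n, MeasurableSet (H n) := by
    intro n
    have hform : H n =
        (⋃ T ∈ Finset.Icc (mm n) (MM n),
          {ω | ε ≤ avgVisit X (scaleTimes X p) (A (kk n)) T ω}) ∩
        (⋂ t ∈ Finset.Icc 1 (MM n), (X t ⁻¹' A (kk (n+1)))ᶜ) := by
      rw [hHdef]
      ext ω
      simp only [Set.mem_setOf_eq, Set.mem_inter_iff, Set.mem_iUnion, Set.mem_iInter,
        Finset.mem_Icc, Set.mem_compl_iff, Set.mem_preimage, exists_prop]
      constructor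
      · rintro ⟨⟨T, h1, h2, h3⟩, h4⟩
        exact ⟨⟨T, ⟨h1, h2⟩, h3⟩, fun t ht => h4 t ht.1 ht.2⟩
      · rintro ⟨⟨T, ⟨h1, h2⟩, h3⟩, h4⟩
        exact ⟨⟨T, h1, h2, h3⟩, fun t ht1 ht2 => h4 t ⟨ht1, ht2⟩⟩
    rw [hform]
    refine MeasurableSet.inter ?_ ?_
    · exact MeasurableSet.biUnion (Finset.Icc (mm n) (MM n)).countable_toSet fun T _ =>
        measurableSet_le measurable_const (measurable_avgVisit hX (hA _) p T)
    · exact MeasurableSet.biInter (Finset.Icc 1 (MM n)).countable_toSet fun t _ =>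
        ((hX t) (hA _)).compl
  -- the disjoint test sets
  set B : ℕ → Set 𝒳 := fun n => A (kk n) \ A (kk (n+1)) with hBdef
  have hBdisj : ∀ {n n' : ℕ}, n < n' → Disjoint (B n) (B n') := by
    intro n n' h
    rw [Set.disjoint_left]
    intro x hx hx'
    exact hx.2 (hAnt (hkmono.monotone (by omega : n + 1 ≤ n')) hx'.1)
  set Bh : ℕ → Set 𝒳 := fun i => ⋃ j, B (Nat.pair i j) with hBhdef
  have hBhmeas : ∀ i, MeasurableSet (Bh i) :=
    fun i => MeasurableSet.iUnion fun j => (hA _).diff (hA _)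
  have hBhdisj : Pairwise (Function.onFun Disjoint Bh) := by
    intro i i' hii'
    simp only [Function.onFun, hBhdef]
    rw [Set.disjoint_left]
    intro x hx hx'
    obtain ⟨j, hj⟩ := Set.mem_iUnion.1 hx
    obtain ⟨j', hj'⟩ := Set.mem_iUnion.1 hx'
    have hne : Nat.pair i j ≠ Nat.pair i' j' := by
      intro hcontra
      exact hii' (Nat.pair_eq_pair.1 hcontra).1
    rcases Nat.lt_or_ge (Nat.pair i j) (Nat.pair i' j') with h | h
    · exact Set.disjoint_left.1 (hBdisj h) hj hj'
    · have hlt : Nat.pair i' j' < Nat.pair i j := lt_of_le_of_ne h (Ne.symm hne)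
      exact Set.disjoint_left.1 (hBdisj hlt) hj' hj
  -- lower bound on the C4 integrals for i ≥ p
  have hfinal : ∀ i, p ≤ i →
      ε * (ε/4) ≤ ∫ ω, limitSubmeasure X (scaleTimes X i) (Bh i) ω ∂P := by
    intro i hpi
    set Hh : Set Ω := ⋂ N, ⋃ j, ⋃ (_ : N ≤ j), H (Nat.pair i j) with hHhdef
    have hHhmeas : MeasurableSet Hh :=
      MeasurableSet.iInter fun N => MeasurableSet.iUnion fun j =>
        MeasurableSet.iUnion fun _ => hHmeas _
    have hHhP : ENNReal.ofReal (ε/4) ≤ P Hh := by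
      have hanti' : Antitone (fun N => ⋃ j, ⋃ (_ : N ≤ j), H (Nat.pair i j)) := by
        intro N N' hNN' ω hω
        simp only [Set.mem_iUnion, exists_prop] at hω ⊢
        obtain ⟨j, hj, hωj⟩ := hω
        exact ⟨j, le_trans hNN' hj, hωj⟩
      have hmeas' : ∀ N, NullMeasurableSet (⋃ j, ⋃ (_ : N ≤ j), H (Nat.pair i j)) P :=
        fun N => (MeasurableSet.iUnion fun j =>
          MeasurableSet.iUnion fun _ => hHmeas _).nullMeasurableSet
      have hlim := tendsto_measure_iInter_atTop (μ := P) hmeas' hanti' ⟨0, measure_ne_top _ _⟩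
      refine ge_of_tendsto hlim (Filter.Eventually.of_forall fun N => ?_)
      refine le_trans (hPH (Nat.pair i N)) (measure_mono ?_)
      intro ω hω
      exact Set.mem_iUnion.2 ⟨N, Set.mem_iUnion.2 ⟨le_refl N, hω⟩⟩
    have hpoint : ∀ ω ∈ Hh, ε ≤ limitSubmeasure X (scaleTimes X i) (Bh i) ω := by
      intro ω hω
      apply Filter.le_limsup_of_frequently_le ?_
        (Filter.isBoundedUnder_of ⟨1, fun T => avgVisit_le_one (X := X) _ _ T ω⟩)
      rw [Filter.frequently_atTop]
      intro N
      have hω' := Set.mem_iInter.1 hω N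
      simp only [Set.mem_iUnion, exists_prop] at hω'
      obtain ⟨j, hjN, hωH⟩ := hω'
      obtain ⟨⟨T, hT1, hT2, hT3⟩, hesc⟩ := hωH
      refine ⟨T, ?_, ?_⟩
      · have h1 : j ≤ Nat.pair i j := Nat.right_le_pair i j
        have h2 := hmge (Nat.pair i j)
        omega
      · refine le_trans hT3 (avgVisit_le_avgVisit (scaleTimes_subset hpi ω) ?_)
        intro t h1t htT hmem
        have hnot : X t ω ∉ A (kk (Nat.pair i j + 1)) := hesc t h1t (le_trans htT hT2)
        exact Set.mem_iUnion.2 ⟨j, ⟨hmem, hnot⟩⟩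
    have hPHtoReal : ε/4 ≤ (P Hh).toReal := by
      have hmono := ENNReal.toReal_mono (measure_ne_top P Hh) hHhP
      rwa [ENNReal.toReal_ofReal (by linarith : (0:ℝ) ≤ ε/4)] at hmono
    calc ε * (ε/4) ≤ ε * (P Hh).toReal := by
          apply mul_le_mul_of_nonneg_left hPHtoReal hεpos.le
      _ ≤ ∫ ω, limitSubmeasure X (scaleTimes X i) (Bh i) ω ∂P := by
          exact integral_ge_of_indicator (hInt i (Bh i) (hBhmeas i))
            (fun ω => limitSubmeasure_nonneg (X := X) _ _ ω) hHhmeas hεpos.le hpoint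
  -- contradiction with C4
  have hC4' := hC4 Bh hBhmeas hBhdisj
  have hle0 : ε * (ε/4) ≤ 0 :=
    ge_of_tendsto hC4' (Filter.eventually_atTop.2 ⟨p, fun i hi => hfinal i hi⟩)
  nlinarith
end
end

section
/- Let 𝒳 be a separable metrizable space with its Borel σ-algebra and 𝕏 a stochastic process on 𝒳 satisfying condition C4. Then for every p ≥ 0 and every ε > 0 there exist an integer T ≥ 1 and δ > 0 such that for every measurable set A ⊆ 𝒳 with sup_{l≥0} E[μ̂_{𝕏^l}(A)] ≤ δ, one has E[ sup_{T' ≥ T} (1/T') Σ_{t ≤ T', t ∈ 𝒯^p} 1_A(X_t) ] ≤ ε. -/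
open MeasureTheory Filter Set Topology

noncomputable section

variable {Ω : Type*} [MeasurableSpace Ω] {𝒳 : Type*} [MeasurableSpace 𝒳]

namespace Stmt12Aux

variable {Ω : Type*} [MeasurableSpace Ω] {𝒳 : Type*} [MeasurableSpace 𝒳]

lemma timeGrid_eq (i k : ℕ) :
    timeGrid i k = 2 ^ (k / 2 ^ i) * (2 ^ i + k % 2 ^ i) / 2 ^ i := by
  have h2 : ((2 : ℝ) ^ i) ≠ 0 := by positivity
  have h : (2 : ℝ) ^ (k / 2 ^ i) * (1 + ((k % 2 ^ i : ℕ) : ℝ) / ((2 : ℝ) ^ i))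
      = ((2 ^ (k / 2 ^ i) * (2 ^ i + k % 2 ^ i) : ℕ) : ℝ) / ((2 ^ i : ℕ) : ℝ) := by
    push_cast
    field_simp
    try ring
  rw [timeGrid, h, Nat.floor_div_natCast, Nat.floor_natCast]

lemma timeGrid_succ (i k : ℕ) :
    timeGrid i (k + 1) = 2 ^ (k / 2 ^ i) * (2 ^ i + k % 2 ^ i + 1) / 2 ^ i := by
  have hpos : 0 < 2 ^ i := Nat.two_pow_pos i
  have hdm := Nat.div_add_mod k (2 ^ i)
  have hv : k % 2 ^ i < 2 ^ i := Nat.mod_lt _ hpos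
  rcases Nat.lt_or_ge (k % 2 ^ i + 1) (2 ^ i) with h1 | h1
  · have e : k + 1 = (k % 2 ^ i + 1) + 2 ^ i * (k / 2 ^ i) := by omega
    rw [timeGrid_eq, e, Nat.add_mul_div_left _ _ hpos, Nat.add_mul_mod_self_left,
      Nat.div_eq_of_lt h1, Nat.mod_eq_of_lt h1, Nat.zero_add,
      show 2 ^ i + (k % 2 ^ i + 1) = 2 ^ i + k % 2 ^ i + 1 by omega]
  · have h1' : k % 2 ^ i + 1 = 2 ^ i := by omega
    have e : k + 1 = 2 ^ i * (k / 2 ^ i + 1) := by rw [Nat.mul_add, Nat.mul_one]; omega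
    have hdiv : (k + 1) / 2 ^ i = k / 2 ^ i + 1 := by
      rw [e, mul_comm, Nat.mul_div_cancel _ hpos]
    have hmod : (k + 1) % 2 ^ i = 0 := by rw [e]; exact Nat.mul_mod_right _ _
    rw [timeGrid_eq, hdiv, hmod, show 2 ^ i + 0 = 2 ^ i from rfl, Nat.mul_div_cancel _ hpos,
      show 2 ^ i + k % 2 ^ i + 1 = 2 * 2 ^ i by omega,
      show 2 ^ (k / 2 ^ i) * (2 * 2 ^ i) = 2 ^ (k / 2 ^ i + 1) * 2 ^ i by ring,
      Nat.mul_div_cancel _ hpos]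

lemma timeGrid_nest {p i : ℕ} (hpi : p ≤ i) (k : ℕ) :
    ∃ k', timeGrid p k' ≤ timeGrid i k ∧ timeGrid i (k + 1) ≤ timeGrid p (k' + 1) := by
  set u := k / 2 ^ i with hu
  set v := k % 2 ^ i with hvdef
  set d := 2 ^ (i - p) with hd
  have hdpos : 0 < d := Nat.two_pow_pos _
  have hppos : 0 < 2 ^ p := Nat.two_pow_pos _
  have h2i : (2 : ℕ) ^ i = 2 ^ p * d := by rw [hd, ← pow_add]; congr 1; omega
  have hvlt : v < 2 ^ i := Nat.mod_lt _ (Nat.two_pow_pos _)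
  have hvd : v / d < 2 ^ p := Nat.div_lt_of_lt_mul (by rw [mul_comm d]; omega)
  have hvdd : v / d * d ≤ v := Nat.div_mul_le_self v d
  have hvdd2 : v < v / d * d + d := by
    have h4 := Nat.div_add_mod' v d
    have h5 := Nat.mod_lt v hdpos
    omega
  refine ⟨v / d + 2 ^ p * u, ?_, ?_⟩
  · rw [timeGrid_eq p, timeGrid_eq i,
      Nat.add_mul_div_left _ _ hppos, Nat.add_mul_mod_self_left,
      Nat.div_eq_of_lt hvd, Nat.mod_eq_of_lt hvd, Nat.zero_add, ← hu, ← hvdef, h2i,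
      ← Nat.mul_div_mul_right (2 ^ u * (2 ^ p + v / d)) (2 ^ p) hdpos]
    apply Nat.div_le_div_right
    nlinarith [Nat.two_pow_pos u]
  · rw [timeGrid_succ i, timeGrid_succ p,
      Nat.add_mul_div_left _ _ hppos, Nat.add_mul_mod_self_left,
      Nat.div_eq_of_lt hvd, Nat.mod_eq_of_lt hvd, Nat.zero_add, ← hu, ← hvdef, h2i,
      ← Nat.mul_div_mul_right (2 ^ u * (2 ^ p + v / d + 1)) (2 ^ p) hdpos]
    apply Nat.div_le_div_right
    nlinarith [Nat.two_pow_pos u]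

omit [MeasurableSpace Ω] [MeasurableSpace 𝒳] in
lemma scaleTimes_mono {p i : ℕ} (hpi : p ≤ i) (X : ℕ → Ω → 𝒳) (ω : Ω) :
    scaleTimes X p ω ⊆ scaleTimes X i ω := by
  rintro t ⟨ht1, ht2⟩
  refine ⟨ht1, fun k hk1 hk2 t' ht'1 ht'2 => ?_⟩
  obtain ⟨k', hk'1, hk'2⟩ := timeGrid_nest hpi k
  exact ht2 k' (hk'1.trans hk1) (lt_of_lt_of_le hk2 hk'2) t' (hk'1.trans ht'1) ht'2

end Stmt12Aux

namespace Stmt12Aux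

variable {X : ℕ → Ω → 𝒳} {𝒯 𝒯' : Ω → Set ℕ} {A B : Set 𝒳} {T T₀ : ℕ} {ω : Ω}

omit [MeasurableSpace Ω] [MeasurableSpace 𝒳] in
lemma avg_nonneg : 0 ≤ avgVisit X 𝒯 A T ω := by
  unfold avgVisit
  refine mul_nonneg (by positivity) (Finset.sum_nonneg fun t _ => ?_)
  exact Set.indicator_nonneg (fun _ _ => zero_le_one) t

omit [MeasurableSpace Ω] [MeasurableSpace 𝒳] in
lemma avg_le_one : avgVisit X 𝒯 A T ω ≤ 1 := by
  unfold avgVisit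
  rcases Nat.eq_zero_or_pos T with h | h
  · simp [h]
  have hsum : ∑ t ∈ Finset.Icc 1 T,
      ({s : ℕ | s ∈ 𝒯 ω ∧ X s ω ∈ A}.indicator (fun _ => (1 : ℝ)) t) ≤ T := by
    calc ∑ t ∈ Finset.Icc 1 T, ({s : ℕ | s ∈ 𝒯 ω ∧ X s ω ∈ A}.indicator (fun _ => (1 : ℝ)) t)
        ≤ ∑ _t ∈ Finset.Icc 1 T, (1 : ℝ) := by
          refine Finset.sum_le_sum fun t _ => ?_
          by_cases ht : t ∈ {s : ℕ | s ∈ 𝒯 ω ∧ X s ω ∈ A} <;> simp [Set.indicator_apply, ht]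
      _ = T := by simp [Nat.card_Icc]
  calc (T : ℝ)⁻¹ * ∑ t ∈ Finset.Icc 1 T,
        ({s : ℕ | s ∈ 𝒯 ω ∧ X s ω ∈ A}.indicator (fun _ => (1 : ℝ)) t)
      ≤ (T : ℝ)⁻¹ * T := by
        refine mul_le_mul_of_nonneg_left hsum (by positivity)
    _ = 1 := by
        rw [inv_mul_cancel₀]
        exact_mod_cast Nat.pos_iff_ne_zero.mp h

omit [MeasurableSpace Ω] [MeasurableSpace 𝒳] in
lemma avg_mono (h : {s : ℕ | s ∈ 𝒯 ω ∧ X s ω ∈ A} ⊆ {s : ℕ | s ∈ 𝒯' ω ∧ X s ω ∈ B}) :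
    avgVisit X 𝒯 A T ω ≤ avgVisit X 𝒯' B T ω := by
  unfold avgVisit
  refine mul_le_mul_of_nonneg_left (Finset.sum_le_sum fun t _ => ?_) (by positivity)
  exact Set.indicator_le_indicator_of_subset h (fun _ => zero_le_one) t

omit [MeasurableSpace Ω] [MeasurableSpace 𝒳] in
lemma avg_subadd (A B : Set 𝒳) :
    avgVisit X 𝒯 A T ω ≤ avgVisit X 𝒯 (A \ B) T ω + avgVisit X 𝒯 B T ω := by
  unfold avgVisit
  rw [← mul_add, ← Finset.sum_add_distrib]
  refine mul_le_mul_of_nonneg_left (Finset.sum_le_sum fun t _ => ?_) (by positivity)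
  by_cases h1 : t ∈ 𝒯 ω
  · by_cases h2 : X t ω ∈ A
    · by_cases h3 : X t ω ∈ B
      · have h4 : X t ω ∈ B ∨ X t ω ∈ A \ B := Or.inl h3
        rcases h4 with h4 | h4 <;>
          simp [Set.indicator_apply, Set.mem_setOf_eq, Set.mem_diff, h1, h2, h3]
      · simp [Set.indicator_apply, Set.mem_setOf_eq, Set.mem_diff, h1, h2, h3]
    · by_cases h3 : X t ω ∈ B <;>
        simp [Set.indicator_apply, Set.mem_setOf_eq, Set.mem_diff, h1, h2, h3]
  · simp [Set.indicator_apply, Set.mem_setOf_eq, h1]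

omit [MeasurableSpace Ω] [MeasurableSpace 𝒳] in
lemma avg_le_diff_add_sum (A : Set 𝒳) (f : ℕ → Set 𝒳) (n : ℕ) :
    avgVisit X 𝒯 A T ω ≤ avgVisit X 𝒯 (A \ ⋃ m ∈ Finset.range n, f m) T ω
      + ∑ m ∈ Finset.range n, avgVisit X 𝒯 (f m) T ω := by
  induction n with
  | zero => simp
  | succ n ih =>
      have hU : (⋃ m ∈ Finset.range (n + 1), f m) = (⋃ m ∈ Finset.range n, f m) ∪ f n := by
        rw [Finset.range_add_one]
        rw [Finset.set_biUnion_insert]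
        exact Set.union_comm _ _
      have hset : A \ ⋃ m ∈ Finset.range (n + 1), f m
          = (A \ ⋃ m ∈ Finset.range n, f m) \ f n := by
        rw [hU, ← Set.diff_diff]
      calc avgVisit X 𝒯 A T ω
          ≤ avgVisit X 𝒯 (A \ ⋃ m ∈ Finset.range n, f m) T ω
            + ∑ m ∈ Finset.range n, avgVisit X 𝒯 (f m) T ω := ih
        _ ≤ (avgVisit X 𝒯 ((A \ ⋃ m ∈ Finset.range n, f m) \ f n) T ω
              + avgVisit X 𝒯 (f n) T ω)
            + ∑ m ∈ Finset.range n, avgVisit X 𝒯 (f m) T ω := by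
              have := avg_subadd (X := X) (𝒯 := 𝒯) (T := T) (ω := ω)
                (A \ ⋃ m ∈ Finset.range n, f m) (f n)
              linarith
        _ = avgVisit X 𝒯 (A \ ⋃ m ∈ Finset.range (n + 1), f m) T ω
            + ∑ m ∈ Finset.range (n + 1), avgVisit X 𝒯 (f m) T ω := by
              rw [hset, Finset.sum_range_succ]
              ring

/-- Supremum over `T ≥ T₀`, reindexed over `ℕ`. -/
def supAvgN (X : ℕ → Ω → 𝒳) (𝒯 : Ω → Set ℕ) (A : Set 𝒳) (T₀ : ℕ) (ω : Ω) : ℝ :=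
  ⨆ n : ℕ, avgVisit X 𝒯 A (T₀ + n) ω

omit [MeasurableSpace Ω] [MeasurableSpace 𝒳] in
lemma bddAbove_avg {ι : Sort*} (g : ι → ℕ) :
    BddAbove (Set.range fun n : ι => avgVisit X 𝒯 A (g n) ω) := by
  refine ⟨1, ?_⟩
  rintro x ⟨n, rfl⟩
  exact avg_le_one

omit [MeasurableSpace Ω] [MeasurableSpace 𝒳] in
lemma supAvgN_le_one : supAvgN X 𝒯 A T₀ ω ≤ 1 :=
  ciSup_le fun _ => avg_le_one

omit [MeasurableSpace Ω] [MeasurableSpace 𝒳] in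
lemma supAvgN_nonneg : 0 ≤ supAvgN X 𝒯 A T₀ ω :=
  le_trans avg_nonneg (le_ciSup (bddAbove_avg _) 0)

omit [MeasurableSpace Ω] [MeasurableSpace 𝒳] in
lemma avg_le_supAvgN (h : T₀ ≤ T) : avgVisit X 𝒯 A T ω ≤ supAvgN X 𝒯 A T₀ ω := by
  have : T = T₀ + (T - T₀) := by omega
  rw [this]
  exact le_ciSup (bddAbove_avg _) (T - T₀)

omit [MeasurableSpace Ω] [MeasurableSpace 𝒳] in
lemma supAvgN_antitone {T₁ : ℕ} (h : T₀ ≤ T₁) :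
    supAvgN X 𝒯 A T₁ ω ≤ supAvgN X 𝒯 A T₀ ω :=
  ciSup_le fun n => avg_le_supAvgN (by omega)

omit [MeasurableSpace Ω] [MeasurableSpace 𝒳] in
lemma supAvgVisit_eq_supAvgN :
    supAvgVisit X 𝒯 A T₀ ω = supAvgN X 𝒯 A T₀ ω := by
  unfold supAvgVisit supAvgN
  haveI : Nonempty {T : ℕ // T₀ ≤ T} := ⟨⟨T₀, le_refl _⟩⟩
  apply le_antisymm
  · refine ciSup_le fun T => ?_
    have : (T : ℕ) = T₀ + ((T : ℕ) - T₀) := by have := T.2; omega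
    rw [this]
    exact le_ciSup (bddAbove_avg _) ((T : ℕ) - T₀)
  · refine ciSup_le fun n => ?_
    exact le_ciSup (f := fun T : {T : ℕ // T₀ ≤ T} => avgVisit X 𝒯 A (T : ℕ) ω)
      (bddAbove_avg _) ⟨T₀ + n, by omega⟩

omit [MeasurableSpace Ω] [MeasurableSpace 𝒳] in
lemma limitSubmeasure_eq_iInf :
    limitSubmeasure X 𝒯 A ω = ⨅ T₀ : ℕ, supAvgN X 𝒯 A T₀ ω := by
  unfold limitSubmeasure
  have hb1 : Filter.IsBoundedUnder (· ≤ ·) Filter.atTop (fun T => avgVisit X 𝒯 A T ω) :=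
    Filter.isBoundedUnder_of ⟨1, fun _ => avg_le_one⟩
  have hb0 : Filter.IsBoundedUnder (· ≥ ·) Filter.atTop (fun T => avgVisit X 𝒯 A T ω) :=
    Filter.isBoundedUnder_of ⟨0, fun _ => avg_nonneg⟩
  apply le_antisymm
  · refine le_ciInf fun T₀ => ?_
    refine Filter.limsup_le_of_le hb0.isCoboundedUnder_le ?_
    filter_upwards [Filter.eventually_ge_atTop T₀] with T hT
    exact avg_le_supAvgN hT
  · refine le_of_forall_gt_imp_ge_of_dense fun b hb => ?_
    obtain ⟨T₀, hT₀⟩ := (Filter.eventually_atTop).1 (Filter.eventually_lt_of_limsup_lt hb hb1)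
    refine ciInf_le_of_le ?_ T₀ ?_
    · refine ⟨0, ?_⟩
      rintro x ⟨T, rfl⟩
      exact supAvgN_nonneg
    · exact ciSup_le fun n => (hT₀ (T₀ + n) (by omega)).le

omit [MeasurableSpace Ω] [MeasurableSpace 𝒳] in
lemma limitSubmeasure_nonneg : 0 ≤ limitSubmeasure X 𝒯 A ω := by
  rw [limitSubmeasure_eq_iInf]
  exact le_ciInf fun T₀ => supAvgN_nonneg

omit [MeasurableSpace Ω] [MeasurableSpace 𝒳] in
lemma limitSubmeasure_le_one : limitSubmeasure X 𝒯 A ω ≤ 1 := by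
  rw [limitSubmeasure_eq_iInf]
  refine ciInf_le_of_le ⟨0, by rintro x ⟨T, rfl⟩; exact supAvgN_nonneg⟩ 0 supAvgN_le_one

omit [MeasurableSpace Ω] [MeasurableSpace 𝒳] in
lemma tendsto_supAvgN :
    Filter.Tendsto (fun T₀ => supAvgN X 𝒯 A T₀ ω) Filter.atTop
      (nhds (limitSubmeasure X 𝒯 A ω)) := by
  rw [limitSubmeasure_eq_iInf]
  exact tendsto_atTop_ciInf (fun a b hab => supAvgN_antitone hab)
    ⟨0, by rintro x ⟨T, rfl⟩; exact supAvgN_nonneg⟩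

end Stmt12Aux

namespace Stmt12Aux

section Meas

variable {Ω : Type*} [MeasurableSpace Ω] {𝒳 : Type*} [MeasurableSpace 𝒳]
  [TopologicalSpace 𝒳] [TopologicalSpace.MetrizableSpace 𝒳] [BorelSpace 𝒳]
  [SecondCountableTopology 𝒳] {X : ℕ → Ω → 𝒳} {A : Set 𝒳}

lemma measurableSet_visit (hX : ∀ t, Measurable (X t)) (i t : ℕ) (hA : MeasurableSet A) :
    MeasurableSet {ω | t ∈ scaleTimes X i ω ∧ X t ω ∈ A} := by
  have hne : ∀ s t : ℕ, MeasurableSet {ω | X s ω ≠ X t ω} := fun s t =>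
    (MeasureTheory.StronglyMeasurable.measurableSet_eq_fun (hX s).stronglyMeasurable (hX t).stronglyMeasurable).compl
  have h1 : {ω | t ∈ scaleTimes X i ω}
      = {ω : Ω | 1 ≤ t} ∩ ⋂ (k) (_ : timeGrid i k ≤ t) (_ : t < timeGrid i (k + 1))
          (t') (_ : timeGrid i k ≤ t') (_ : t' < t), {ω | X t' ω ≠ X t ω} := by
    ext ω
    simp only [scaleTimes, Set.mem_setOf_eq, Set.mem_inter_iff, Set.mem_iInter]
  have h2 : {ω | t ∈ scaleTimes X i ω ∧ X t ω ∈ A}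
      = {ω | t ∈ scaleTimes X i ω} ∩ (X t ⁻¹' A) := rfl
  rw [h2, h1]
  refine MeasurableSet.inter (MeasurableSet.inter (MeasurableSet.const _) ?_) (hX t hA)
  exact MeasurableSet.iInter fun k => MeasurableSet.iInter fun _ =>
    MeasurableSet.iInter fun _ => MeasurableSet.iInter fun t' =>
      MeasurableSet.iInter fun _ => MeasurableSet.iInter fun _ => hne t' t

lemma measurable_avg (hX : ∀ t, Measurable (X t)) (i : ℕ) (hA : MeasurableSet A) (T : ℕ) :
    Measurable fun ω => avgVisit X (scaleTimes X i) A T ω := by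
  unfold avgVisit
  refine Measurable.const_mul ?_ _
  refine Finset.measurable_sum _ fun t _ => ?_
  have h : (fun ω => ({s : ℕ | s ∈ scaleTimes X i ω ∧ X s ω ∈ A}.indicator
        (fun _ => (1 : ℝ)) t))
      = ({ω | t ∈ scaleTimes X i ω ∧ X t ω ∈ A}.indicator fun _ => (1 : ℝ)) := by
    funext ω
    by_cases h : t ∈ scaleTimes X i ω ∧ X t ω ∈ A <;>
      simp [Set.indicator_apply, h, Set.mem_setOf_eq]
  rw [h]
  exact measurable_const.indicator (measurableSet_visit hX i t hA)

lemma measurable_supAvgN (hX : ∀ t, Measurable (X t)) (i : ℕ) (hA : MeasurableSet A)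
    (T₀ : ℕ) : Measurable fun ω => supAvgN X (scaleTimes X i) A T₀ ω :=
  Measurable.iSup fun n => measurable_avg hX i hA (T₀ + n)

lemma measurable_limitSubmeasure (hX : ∀ t, Measurable (X t)) (i : ℕ)
    (hA : MeasurableSet A) :
    Measurable fun ω => limitSubmeasure X (scaleTimes X i) A ω := by
  have h : (fun ω => limitSubmeasure X (scaleTimes X i) A ω)
      = fun ω => ⨅ T₀ : ℕ, supAvgN X (scaleTimes X i) A T₀ ω := by
    funext ω; exact limitSubmeasure_eq_iInf
  rw [h]
  exact Measurable.iInf fun T₀ => measurable_supAvgN hX i hA T₀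

variable {P : Measure Ω} [IsProbabilityMeasure P]

lemma integrable_of_bounds {f : Ω → ℝ} (hm : Measurable f) (h0 : ∀ ω, 0 ≤ f ω)
    (h1 : ∀ ω, f ω ≤ 1) : Integrable f P := by
  refine (integrable_const (1 : ℝ)).mono' hm.aestronglyMeasurable ?_
  refine Filter.Eventually.of_forall fun ω => ?_
  rw [Real.norm_eq_abs, abs_of_nonneg (h0 ω)]
  exact h1 ω

lemma integral_le_one' {f : Ω → ℝ} (hf : Integrable f P) (h1 : ∀ ω, f ω ≤ 1) :
    ∫ ω, f ω ∂P ≤ 1 := by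
  calc ∫ ω, f ω ∂P ≤ ∫ _ω, (1 : ℝ) ∂P := integral_mono hf (integrable_const 1) h1
    _ = 1 := by simp

lemma integrable_supAvgN (hX : ∀ t, Measurable (X t)) (i : ℕ) (hA : MeasurableSet A)
    (T₀ : ℕ) : Integrable (fun ω => supAvgN X (scaleTimes X i) A T₀ ω) P :=
  integrable_of_bounds (measurable_supAvgN hX i hA T₀) (fun _ => supAvgN_nonneg)
    (fun _ => supAvgN_le_one)

lemma integrable_limitSubmeasure (hX : ∀ t, Measurable (X t)) (i : ℕ)
    (hA : MeasurableSet A) :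
    Integrable (fun ω => limitSubmeasure X (scaleTimes X i) A ω) P :=
  integrable_of_bounds (measurable_limitSubmeasure hX i hA)
    (fun _ => limitSubmeasure_nonneg) (fun _ => limitSubmeasure_le_one)

lemma tendsto_integral_supAvgN (hX : ∀ t, Measurable (X t)) (i : ℕ)
    (hA : MeasurableSet A) :
    Filter.Tendsto (fun T₀ => ∫ ω, supAvgN X (scaleTimes X i) A T₀ ω ∂P) Filter.atTop
      (nhds (∫ ω, limitSubmeasure X (scaleTimes X i) A ω ∂P)) := by
  refine tendsto_integral_of_dominated_convergence (fun _ => (1 : ℝ))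
    (fun T₀ => (measurable_supAvgN hX i hA T₀).aestronglyMeasurable)
    (integrable_const 1) (fun T₀ => Filter.Eventually.of_forall fun ω => ?_)
    (Filter.Eventually.of_forall fun ω => tendsto_supAvgN)
  rw [Real.norm_eq_abs, abs_of_nonneg supAvgN_nonneg]
  exact supAvgN_le_one

end Meas

end Stmt12Aux

namespace Stmt12Aux

/-- Course-of-values recursion on `ℕ` producing a sequence of naturals. -/
def natSeq (f : (n : ℕ) → ((m : ℕ) → m < n → ℕ) → ℕ) : ℕ → ℕ
  | n => f n fun m _hm => natSeq f m
  termination_by n => n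
  decreasing_by exact _hm

lemma natSeq_eq (f : (n : ℕ) → ((m : ℕ) → m < n → ℕ) → ℕ) (n : ℕ) :
    natSeq f n = f n fun m _ => natSeq f m := by
  rw [natSeq]

end Stmt12Aux

open Stmt12Aux in
/-- for C4 processes, uniform deviation bounds at each scale p, with
smallness measured uniformly over all scales l. -/
theorem stmt12 [TopologicalSpace 𝒳] [TopologicalSpace.SeparableSpace 𝒳]
    [TopologicalSpace.MetrizableSpace 𝒳] [BorelSpace 𝒳]
    (P : Measure Ω) [IsProbabilityMeasure P]
    (X : ℕ → Ω → 𝒳) (hX : ∀ t, Measurable (X t))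
    (hC4 : SatisfiesC4 P X) :
    ∀ (p : ℕ) (ε : ℝ), 0 < ε → ∃ T : ℕ, 1 ≤ T ∧ ∃ δ : ℝ, 0 < δ ∧
      ∀ A : Set 𝒳, MeasurableSet A →
        (⨆ l : ℕ, ∫ ω, limitSubmeasure X (scaleTimes X l) A ω ∂P) ≤ δ →
        (∫ ω, supAvgVisit X (scaleTimes X p) A T ω ∂P) ≤ ε := by
  haveI : SecondCountableTopology 𝒳 := by
    letI := TopologicalSpace.metrizableSpaceMetric 𝒳
    exact UniformSpace.secondCountable_of_separable 𝒳
  intro p ε hε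
  by_contra hcon
  push_neg at hcon
  classical
  -- the small constants
  set dm : ℕ → ℝ := fun m => ε / 16 * (1 / 2) ^ m with hdmdef
  have hdmpos : ∀ m, 0 < dm m := fun m => by rw [hdmdef]; positivity
  have hdmsum : ∀ n : ℕ, ∑ m ∈ Finset.range n, 2 * dm m ≤ ε / 4 := by
    intro n
    have hg := sum_geometric_two_le n
    have : ∑ m ∈ Finset.range n, 2 * dm m
        = ε / 8 * ∑ m ∈ Finset.range n, (1 / 2 : ℝ) ^ m := by
      rw [Finset.mul_sum]
      refine Finset.sum_congr rfl fun m _ => ?_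
      rw [hdmdef]; ring
    rw [this]
    nlinarith
  -- bad sets for every horizon
  have hbad : ∀ T m : ℕ, ∃ A : Set 𝒳, MeasurableSet A ∧
      (⨆ l : ℕ, ∫ ω, limitSubmeasure X (scaleTimes X l) A ω ∂P) ≤ dm m ∧
      ε < ∫ ω, supAvgVisit X (scaleTimes X p) A (max 1 T) ω ∂P := fun T m =>
    hcon (max 1 T) (le_max_left 1 T) (dm m) (hdmpos m)
  choose Abad hAmeas hAsup hAbig using hbad
  have hAl : ∀ T m l : ℕ,
      ∫ ω, limitSubmeasure X (scaleTimes X l) (Abad T m) ω ∂P ≤ dm m := by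
    intro T m l
    refine le_trans (le_ciSup (f := fun l : ℕ =>
      ∫ ω, limitSubmeasure X (scaleTimes X l) (Abad T m) ω ∂P) ?_ l) (hAsup T m)
    refine ⟨1, ?_⟩
    rintro x ⟨l', rfl⟩
    exact integral_le_one' (integrable_limitSubmeasure hX l' (hAmeas T m))
      (fun ω => limitSubmeasure_le_one)
  -- thresholds from which the expected sup-average is small
  have hthr : ∀ T m l : ℕ, ∃ T₀ : ℕ,
      ∫ ω, supAvgN X (scaleTimes X l) (Abad T m) T₀ ω ∂P ≤ 2 * dm m := by
    intro T m l
    have ht := tendsto_integral_supAvgN (P := P) hX l (hAmeas T m)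
    have hlt : ∫ ω, limitSubmeasure X (scaleTimes X l) (Abad T m) ω ∂P < 2 * dm m :=
      lt_of_le_of_lt (hAl T m l) (by have := hdmpos m; linarith)
    exact (ht.eventually_le_const hlt).exists
  choose thr hthrle using hthr
  -- the scale assignment
  set σ : ℕ → ℕ := fun n => p + (Nat.unpair n).1 with hσdef
  -- the recursively defined horizons
  set f : (n : ℕ) → ((m : ℕ) → m < n → ℕ) → ℕ := fun n prev =>
    (n + 1) + (Finset.range n).attach.sup fun m =>
      thr (prev m.1 (Finset.mem_range.mp m.2)) m.1 (σ n) with hfdef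
  set Tn : ℕ → ℕ := natSeq f with hTndef
  have hTn_eq : ∀ n, Tn n = (n + 1) + (Finset.range n).attach.sup fun m =>
      thr (Tn m.1) m.1 (σ n) := by
    intro n
    rw [hTndef, natSeq_eq]
  have hTn_ge : ∀ n, n + 1 ≤ Tn n := fun n => by
    rw [hTn_eq]; exact Nat.le_add_right _ _
  have hTn_thr : ∀ m n, m < n → thr (Tn m) m (σ n) ≤ Tn n := by
    intro m n hmn
    rw [hTn_eq n]
    refine le_trans ?_ (Nat.le_add_left _ _)
    exact Finset.le_sup (f := fun m : {x // x ∈ Finset.range n} =>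
      thr (Tn m.1) m.1 (σ n)) (Finset.mem_attach _ ⟨m, Finset.mem_range.mpr hmn⟩)
  -- the sets
  set A : ℕ → Set 𝒳 := fun n => Abad (Tn n) n with hAdef
  have hA3 : ∀ n, ε < ∫ ω, supAvgVisit X (scaleTimes X p) (A n) (Tn n) ω ∂P := by
    intro n
    have h := hAbig (Tn n) n
    rwa [max_eq_right (show 1 ≤ Tn n from le_trans (by omega) (hTn_ge n))] at h
  set B : ℕ → Set 𝒳 := fun i => ⋃ (n : ℕ) (_ : σ n = i),
    (A n \ ⋃ m ∈ Finset.range n, A m) with hBdef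
  have hGmeas : ∀ n : ℕ, MeasurableSet (A n \ ⋃ m ∈ Finset.range n, A m) := fun n =>
    (hAmeas _ _).diff (MeasurableSet.biUnion (Finset.range n).countable_toSet
      fun m _ => hAmeas _ _)
  have hBmeas : ∀ i, MeasurableSet (B i) := fun i =>
    MeasurableSet.iUnion fun n => MeasurableSet.iUnion fun _ => hGmeas n
  have hGdisj : ∀ m n : ℕ, m < n →
      Disjoint (A m \ ⋃ m' ∈ Finset.range m, A m') (A n \ ⋃ m' ∈ Finset.range n, A m') := by
    intro m n hmn
    rw [Set.disjoint_left]
    intro x hxm hxn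
    exact hxn.2 (Set.mem_biUnion (Finset.mem_coe.mpr (Finset.mem_range.mpr hmn)) hxm.1)
  have hBdisj : Pairwise (Function.onFun Disjoint B) := by
    intro i j hij
    simp only [Function.onFun]
    rw [Set.disjoint_left]
    intro x hxi hxj
    simp only [hBdef, Set.mem_iUnion] at hxi hxj
    obtain ⟨n, hn, hxn⟩ := hxi
    obtain ⟨n', hn', hxn'⟩ := hxj
    have hne : n ≠ n' := fun h => hij (by rw [← hn, ← hn', h])
    rcases Nat.lt_or_ge n n' with h | h
    · exact (Set.disjoint_left.mp (hGdisj n n' h)) hxn hxn'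
    · exact (Set.disjoint_left.mp (hGdisj n' n (by omega))) hxn' hxn
  -- the key lower bound
  have hkey : ∀ i, p ≤ i →
      3 / 4 * ε ≤ ∫ ω, limitSubmeasure X (scaleTimes X i) (B i) ω ∂P := by
    intro i hpi
    have key2 : ∀ T₀ : ℕ, 3 / 4 * ε ≤ ∫ ω, supAvgN X (scaleTimes X i) (B i) T₀ ω ∂P := by
      intro T₀
      set n : ℕ := Nat.pair (i - p) T₀ with hn
      have hσn : σ n = i := by simp only [hσdef, hn, Nat.unpair_pair]; omega
      have hT₀Tn : T₀ ≤ Tn n :=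
        le_trans (le_trans (Nat.right_le_pair _ _) (Nat.le_succ n)) (hTn_ge n)
      have hpoint : ∀ ω, supAvgN X (scaleTimes X p) (A n) (Tn n) ω
          ≤ supAvgN X (scaleTimes X i) (B i) T₀ ω
            + ∑ m ∈ Finset.range n, supAvgN X (scaleTimes X i) (A m) (Tn n) ω := by
        intro ω
        refine ciSup_le fun q => ?_
        have h1 : avgVisit X (scaleTimes X p) (A n) (Tn n + q) ω
            ≤ avgVisit X (scaleTimes X i) (A n) (Tn n + q) ω :=
          avg_mono (fun s hs => ⟨scaleTimes_mono hpi X ω hs.1, hs.2⟩)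
        have h2 := avg_le_diff_add_sum (X := X) (𝒯 := scaleTimes X i)
          (T := Tn n + q) (ω := ω) (A n) A n
        have h3 : avgVisit X (scaleTimes X i) (A n \ ⋃ m ∈ Finset.range n, A m)
              (Tn n + q) ω ≤ supAvgN X (scaleTimes X i) (B i) T₀ ω := by
          refine le_trans (avg_mono fun s hs => ⟨hs.1, ?_⟩) (avg_le_supAvgN (by omega))
          simp only [hBdef, Set.mem_iUnion]
          exact ⟨n, hσn, hs.2⟩
        have h4 : ∑ m ∈ Finset.range n, avgVisit X (scaleTimes X i) (A m) (Tn n + q) ω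
            ≤ ∑ m ∈ Finset.range n, supAvgN X (scaleTimes X i) (A m) (Tn n) ω :=
          Finset.sum_le_sum fun m _ => avg_le_supAvgN (Nat.le_add_right _ _)
        linarith
      have hIB : Integrable (fun ω => supAvgN X (scaleTimes X i) (B i) T₀ ω) P :=
        integrable_supAvgN hX i (hBmeas i) _
      have hIm : ∀ m : ℕ, Integrable
          (fun ω => supAvgN X (scaleTimes X i) (A m) (Tn n) ω) P := fun m =>
        integrable_supAvgN hX i (hAmeas _ _) _
      have hIsum : Integrable (fun ω =>
          ∑ m ∈ Finset.range n, supAvgN X (scaleTimes X i) (A m) (Tn n) ω) P :=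
        integrable_finset_sum _ fun m _ => hIm m
      have hint : ∫ ω, supAvgN X (scaleTimes X p) (A n) (Tn n) ω ∂P
          ≤ ∫ ω, supAvgN X (scaleTimes X i) (B i) T₀ ω ∂P
            + ∑ m ∈ Finset.range n, ∫ ω, supAvgN X (scaleTimes X i) (A m) (Tn n) ω ∂P := by
        calc ∫ ω, supAvgN X (scaleTimes X p) (A n) (Tn n) ω ∂P
            ≤ ∫ ω, (supAvgN X (scaleTimes X i) (B i) T₀ ω
                + ∑ m ∈ Finset.range n, supAvgN X (scaleTimes X i) (A m) (Tn n) ω) ∂P :=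
              integral_mono (integrable_supAvgN hX p (hAmeas _ _) (Tn n))
                (hIB.add hIsum) hpoint
          _ = ∫ ω, supAvgN X (scaleTimes X i) (B i) T₀ ω ∂P
              + ∫ ω, (∑ m ∈ Finset.range n, supAvgN X (scaleTimes X i) (A m) (Tn n) ω) ∂P :=
              integral_add hIB hIsum
          _ = ∫ ω, supAvgN X (scaleTimes X i) (B i) T₀ ω ∂P
              + ∑ m ∈ Finset.range n, ∫ ω, supAvgN X (scaleTimes X i) (A m) (Tn n) ω ∂P := by
              rw [integral_finset_sum _ (fun m _ => hIm m)]
      have hlhs : ε < ∫ ω, supAvgN X (scaleTimes X p) (A n) (Tn n) ω ∂P := by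
        have heq : ∫ ω, supAvgVisit X (scaleTimes X p) (A n) (Tn n) ω ∂P
            = ∫ ω, supAvgN X (scaleTimes X p) (A n) (Tn n) ω ∂P :=
          integral_congr_ae (Filter.Eventually.of_forall fun ω => supAvgVisit_eq_supAvgN)
        have := hA3 n
        linarith
      have hsum : ∑ m ∈ Finset.range n, ∫ ω, supAvgN X (scaleTimes X i) (A m) (Tn n) ω ∂P
          ≤ ε / 4 := by
        refine le_trans (Finset.sum_le_sum fun m hm => ?_) (hdmsum n)
        have hth : thr (Tn m) m i ≤ Tn n := by
          have h := hTn_thr m n (Finset.mem_range.mp hm)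
          rwa [hσn] at h
        calc ∫ ω, supAvgN X (scaleTimes X i) (A m) (Tn n) ω ∂P
            ≤ ∫ ω, supAvgN X (scaleTimes X i) (A m) (thr (Tn m) m i) ω ∂P :=
              integral_mono (hIm m) (integrable_supAvgN hX i (hAmeas _ _) _)
                (fun ω => supAvgN_antitone hth)
          _ ≤ 2 * dm m := hthrle (Tn m) m i
      linarith
    exact ge_of_tendsto (tendsto_integral_supAvgN (P := P) hX i (hBmeas i))
      (Filter.Eventually.of_forall key2)
  -- contradiction with C4
  have htend := hC4 B hBmeas hBdisj
  have hev := htend.eventually_lt_const (show (0 : ℝ) < 3 / 4 * ε by linarith)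
  obtain ⟨i0, hi0⟩ := Filter.eventually_atTop.mp hev
  have h1 := hkey (max i0 p) (le_max_right _ _)
  have h2 := hi0 (max i0 p) (le_max_left _ _)
  linarith
end
end
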